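/- Inductive normalization step: let α₁,…,αₙ ∈ ℂ be linearly independent over ℚ, let k ≥ 3 be odd, let P ∈ ℂ[X₁,…,Xₙ] be a polynomial whose linear part is Σᵢ αᵢXᵢ, and let H ∈ ℂ[[q,p]] satisfy H = P(q₁p₁,…,qₙpₙ) + o(k). Then there exist f ∈ ℂ[[q,p]] of order ≥ k+1 and a homogeneous polynomial B ∈ ℂ[X₁,…,Xₙ] of degree (k+1)/2 such that e^{ad_f}(H) = (P+B)(q₁p₁,…,qₙpₙ) + o(k+2), where e^{ad_f}(H) = Σ_{j≥0}(1/j!)·ad_f^j(H) and ad_f(F) = {F, f}. -/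

import Mathlib

/- ℂ[[q,p]] is `MvPowerSeries (Fin n ⊕ Fin n) ℂ`, where `Sum.inl i` is the
variable `qᵢ` and `Sum.inr i` is the variable `pᵢ`. -/

open MvPowerSeries

/-- Partial derivative of a multivariate formal power series. -/
noncomputable def pd {σ : Type} [DecidableEq σ] (x : σ) (f : MvPowerSeries σ ℂ) :
    MvPowerSeries σ ℂ :=
  fun m => ((m x : ℂ) + 1) * coeff (m + Finsupp.single x 1) f

/-- The Poisson bracket `{f,g} = Σᵢ ∂_{qᵢ}f ∂_{pᵢ}g − ∂_{pᵢ}f ∂_{qᵢ}g` on ℂ[[q,p]]. -/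
noncomputable def pois {n : ℕ} (f g : MvPowerSeries (Fin n ⊕ Fin n) ℂ) :
    MvPowerSeries (Fin n ⊕ Fin n) ℂ :=
  ∑ i : Fin n, (pd (Sum.inl i) f * pd (Sum.inr i) g - pd (Sum.inr i) f * pd (Sum.inl i) g)

/-- Total degree of a monomial. -/
def mdeg {σ : Type} (m : σ →₀ ℕ) : ℕ := m.sum fun _ k => k

/-- `f = g + o(l)`: every monomial of `f − g` has total degree > `l`. -/
def OEq {σ : Type} (f g : MvPowerSeries σ ℂ) (l : ℕ) : Prop :=
  ∀ m, mdeg m ≤ l → coeff m (f - g) = 0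

/-- `f` has order ≥ `a`: every monomial of `f` has total degree ≥ `a`. -/
def OrdGe {σ : Type} (f : MvPowerSeries σ ℂ) (a : ℕ) : Prop :=
  ∀ m, mdeg m < a → coeff m f = 0

/-- Iterates of the adjoint operator `ad_f(F) = {F, f}`: `adIter f F k = ad_f^k(F)`. -/
noncomputable def adIter {n : ℕ} (f F : MvPowerSeries (Fin n ⊕ Fin n) ℂ) :
    ℕ → MvPowerSeries (Fin n ⊕ Fin n) ℂ
  | 0 => F
  | k + 1 => pois (adIter f F k) f

/-- The exponential `e^{ad_f}(F) = Σ_{k≥0} (1/k!) ad_f^k(F)`, defined coefficientwise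
(for each monomial only finitely many terms contribute when `f` has order ≥ 3,
so the finite sum `∑ᶠ` computes the genuine sum). -/
noncomputable def expAd {n : ℕ} (f F : MvPowerSeries (Fin n ⊕ Fin n) ℂ) :
    MvPowerSeries (Fin n ⊕ Fin n) ℂ :=
  fun m => ∑ᶠ k : ℕ, ((k.factorial : ℂ))⁻¹ * coeff m (adIter f F k)

/-! ### Auxiliary lemmas -/

set_option linter.unusedSectionVars false
set_option maxHeartbeats 1000000

section Basic
variable {σ : Type} [DecidableEq σ]

lemma mdeg_add (a b : σ →₀ ℕ) : mdeg (a + b) = mdeg a + mdeg b :=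
  Finsupp.sum_add_index' (fun _ => rfl) (fun _ _ _ => rfl)

lemma mdeg_single (x : σ) (j : ℕ) : mdeg (Finsupp.single x j) = j :=
  Finsupp.sum_single_index rfl

lemma apply_le_mdeg (a : σ →₀ ℕ) (x : σ) : a x ≤ mdeg a := by
  by_cases h : x ∈ a.support
  · exact Finset.single_le_sum (fun _ _ => Nat.zero_le _) h
  · simp [Finsupp.notMem_support_iff.mp h]

lemma mdeg_eq_zero {a : σ →₀ ℕ} (h : mdeg a = 0) : a = 0 := by
  ext x
  have := apply_le_mdeg a x
  simp only [Finsupp.coe_zero, Pi.zero_apply]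
  omega

lemma mdeg_eq_one {a : σ →₀ ℕ} (h : mdeg a = 1) : ∃ i, a = Finsupp.single i 1 := by
  have hne : a ≠ 0 := by rintro rfl; simp [mdeg] at h
  obtain ⟨i, hi⟩ := Finsupp.ne_iff.mp hne
  simp only [Finsupp.coe_zero, Pi.zero_apply] at hi
  refine ⟨i, Finsupp.ext fun j => ?_⟩
  rcases eq_or_ne j i with rfl | hj
  · have := apply_le_mdeg a j
    simp only [Finsupp.single_eq_same]
    omega
  · simp only [Finsupp.single_eq_of_ne' (Ne.symm hj)]
    by_contra hja
    have hjs : j ∈ a.support := Finsupp.mem_support_iff.mpr hja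
    have his : i ∈ a.support := Finsupp.mem_support_iff.mpr hi
    have : a i + (a.support.erase i).sum a = mdeg a := by
      rw [mdeg, Finsupp.sum, Finset.add_sum_erase _ _ his]
    have hj2 : a j ≤ (a.support.erase i).sum a :=
      Finset.single_le_sum (fun _ _ => Nat.zero_le _)
        (Finset.mem_erase.mpr ⟨hj, hjs⟩)
    omega

lemma mdeg_eq_univ_sum {n : ℕ} (a : Fin n →₀ ℕ) : mdeg a = ∑ i, a i :=
  Finsupp.sum_fintype _ _ (fun _ => rfl)

lemma coeff_pd (x : σ) (f : MvPowerSeries σ ℂ) (m : σ →₀ ℕ) :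
    coeff m (pd x f) = ((m x : ℂ) + 1) * coeff (m + Finsupp.single x 1) f := rfl

lemma ordGe_mono {f : MvPowerSeries σ ℂ} {a b : ℕ} (h : OrdGe f a) (hba : b ≤ a) :
    OrdGe f b := fun m hm => h m (lt_of_lt_of_le hm hba)

lemma ordGe_pd {f : MvPowerSeries σ ℂ} {a : ℕ} (h : OrdGe f a) (x : σ) :
    OrdGe (pd x f) (a - 1) := by
  intro m hm
  rw [coeff_pd, h _ (by rw [mdeg_add, mdeg_single]; omega), mul_zero]

lemma ordGe_mul {f g : MvPowerSeries σ ℂ} {a b : ℕ} (hf : OrdGe f a) (hg : OrdGe g b) :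
    OrdGe (f * g) (a + b) := by
  intro m hm
  rw [coeff_mul]
  refine Finset.sum_eq_zero fun p hp => ?_
  have h1 : p.1 + p.2 = m := (Finset.HasAntidiagonal.mem_antidiagonal).mp hp
  have h2 : mdeg p.1 + mdeg p.2 = mdeg m := by rw [← mdeg_add, h1]
  rcases lt_or_ge (mdeg p.1) a with h | h
  · rw [hf _ h, zero_mul]
  · rw [hg _ (by omega), mul_zero]

lemma ordGe_add {f g : MvPowerSeries σ ℂ} {a : ℕ} (hf : OrdGe f a) (hg : OrdGe g a) :
    OrdGe (f + g) a := by
  intro m hm; rw [map_add, hf _ hm, hg _ hm, add_zero]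

lemma ordGe_pois {n : ℕ} {f g : MvPowerSeries (Fin n ⊕ Fin n) ℂ} {a b : ℕ}
    (hf : OrdGe f a) (hg : OrdGe g b) : OrdGe (pois f g) (a + b - 2) := by
  intro m hm
  rw [pois, map_sum]
  refine Finset.sum_eq_zero fun i _ => ?_
  have h1 := ordGe_mul (ordGe_pd hf (Sum.inl i)) (ordGe_pd hg (Sum.inr i))
  have h2 := ordGe_mul (ordGe_pd hf (Sum.inr i)) (ordGe_pd hg (Sum.inl i))
  rw [map_sub, h1 _ (by omega), h2 _ (by omega), sub_zero]

lemma coeff_single_mul_pd (s : σ) (c : ℂ) (f : MvPowerSeries σ ℂ) (m : σ →₀ ℕ) :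
    coeff m (monomial (Finsupp.single s 1) c * pd s f) = c * (m s : ℂ) * coeff m f := by
  rw [coeff_monomial_mul]
  by_cases h : Finsupp.single s 1 ≤ m
  · rw [if_pos h, coeff_pd, tsub_add_cancel_of_le h]
    have hs : 1 ≤ m s := by
      have := h s; simpa using this
    have h2 : ((m - Finsupp.single s 1 : σ →₀ ℕ) s : ℂ) + 1 = (m s : ℂ) := by
      have h3 : (m - Finsupp.single s 1 : σ →₀ ℕ) s = m s - 1 := by
        rw [Finsupp.tsub_apply, Finsupp.single_eq_same]
      rw [h3]
      push_cast [Nat.cast_sub hs]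
      ring
    rw [h2]; ring
  · rw [if_neg h]
    have hs : m s = 0 := by
      by_contra hs
      exact h (Finsupp.single_le_iff.mpr (by omega))
    rw [hs]; push_cast; ring

lemma pd_add (x : σ) (F G : MvPowerSeries σ ℂ) : pd x (F + G) = pd x F + pd x G := by
  ext m
  show ((m x : ℂ) + 1) * coeff (m + Finsupp.single x 1) (F + G) = _
  rw [map_add, map_add, coeff_pd, coeff_pd]
  ring

lemma pd_C (x : σ) (c : ℂ) : pd x (C c) = 0 := by
  ext m
  rw [coeff_pd, coeff_C, if_neg, mul_zero, map_zero]
  intro h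
  have := congrArg (fun g : σ →₀ ℕ => g x) h
  simp at this

end Basic

section Pois
variable {n : ℕ}

lemma pois_add_left (F G f : MvPowerSeries (Fin n ⊕ Fin n) ℂ) :
    pois (F + G) f = pois F f + pois G f := by
  unfold pois
  rw [← Finset.sum_add_distrib]
  refine Finset.sum_congr rfl fun i _ => ?_
  rw [pd_add, pd_add]
  ring

lemma pois_C_left (c : ℂ) (f : MvPowerSeries (Fin n ⊕ Fin n) ℂ) :
    pois (C c) f = 0 := by
  unfold pois
  refine Finset.sum_eq_zero fun i _ => ?_
  rw [pd_C, pd_C, zero_mul, zero_mul, sub_zero]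

end Pois

section Emb
variable {n : ℕ}

noncomputable def emb (a : Fin n →₀ ℕ) : (Fin n ⊕ Fin n) →₀ ℕ :=
  a.mapDomain Sum.inl + a.mapDomain Sum.inr

lemma emb_inl (a : Fin n →₀ ℕ) (i : Fin n) : emb a (Sum.inl i) = a i := by
  rw [emb, Finsupp.add_apply, Finsupp.mapDomain_apply Sum.inl_injective,
    Finsupp.mapDomain_notin_range _ _ (by simp), add_zero]

lemma emb_inr (a : Fin n →₀ ℕ) (i : Fin n) : emb a (Sum.inr i) = a i := by
  rw [emb, Finsupp.add_apply, Finsupp.mapDomain_apply Sum.inr_injective,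
    Finsupp.mapDomain_notin_range _ _ (by simp), zero_add]

lemma emb_inj : Function.Injective (emb (n := n)) := by
  intro a b h
  ext i
  rw [← emb_inl a i, ← emb_inl b i, h]

lemma mdeg_mapDomain {α β : Type} (g : α → β) (a : α →₀ ℕ) :
    mdeg (a.mapDomain g) = mdeg a :=
  Finsupp.sum_mapDomain_index (fun _ => rfl) (fun _ _ _ => rfl)

lemma mdeg_emb (a : Fin n →₀ ℕ) : mdeg (emb a) = 2 * mdeg a := by
  rw [emb, mdeg_add, mdeg_mapDomain, mdeg_mapDomain]
  ring

lemma emb_zero : emb (0 : Fin n →₀ ℕ) = 0 := by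
  rw [emb, Finsupp.mapDomain_zero, Finsupp.mapDomain_zero, add_zero]

lemma emb_single (i : Fin n) :
    emb (Finsupp.single i 1) =
      Finsupp.single (Sum.inl i) 1 + Finsupp.single (Sum.inr i) 1 := by
  rw [emb, Finsupp.mapDomain_single, Finsupp.mapDomain_single]

lemma emb_single_ne_zero (i : Fin n) : emb (Finsupp.single i 1) ≠ 0 := by
  intro h
  have := congrArg (fun g : (Fin n ⊕ Fin n) →₀ ℕ => g (Sum.inl i)) h
  simp only [emb_inl, Finsupp.single_eq_same, Finsupp.coe_zero, Pi.zero_apply] at this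
  exact one_ne_zero this

lemma resonant_eq_emb (m : (Fin n ⊕ Fin n) →₀ ℕ)
    (h : ∀ i, m (Sum.inl i) = m (Sum.inr i)) :
    ∃ a : Fin n →₀ ℕ, m = emb a := by
  refine ⟨m.comapDomain Sum.inl (Sum.inl_injective.injOn), ?_⟩
  ext x
  cases x with
  | inl i => rw [emb_inl, Finsupp.comapDomain_apply]
  | inr i => rw [emb_inr, Finsupp.comapDomain_apply, h]

end Emb

section Monomials
variable {σ : Type} [DecidableEq σ]

lemma monomial_one_pow (m : σ →₀ ℕ) (e : ℕ) :
    (monomial m (1 : ℂ)) ^ e = monomial (e • m) (1 : ℂ) := by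
  induction e with
  | zero => rw [pow_zero, zero_smul, monomial_zero_eq_C_apply, map_one]
  | succ e ih =>
    rw [pow_succ, ih, monomial_mul_monomial, mul_one, succ_nsmul]

lemma prod_monomial {ι : Type*} [DecidableEq ι] (s : Finset ι) (g : ι → (σ →₀ ℕ)) :
    (∏ i ∈ s, monomial (g i) (1 : ℂ)) = monomial (∑ i ∈ s, g i) (1 : ℂ) := by
  induction s using Finset.induction with
  | empty => rw [Finset.prod_empty, Finset.sum_empty, monomial_zero_eq_C_apply, map_one]
  | insert _ _ h ih =>
    rw [Finset.prod_insert h, Finset.sum_insert h, ih, monomial_mul_monomial, mul_one]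

end Monomials

section Aeval
variable {n : ℕ}

/-- The substitution `Xᵢ ↦ qᵢpᵢ`. -/
noncomputable def QP (n : ℕ) : Fin n → MvPowerSeries (Fin n ⊕ Fin n) ℂ :=
  fun i => X (Sum.inl i) * X (Sum.inr i)

lemma mapDomain_eq_sum (a : Fin n →₀ ℕ) (g : Fin n → (Fin n ⊕ Fin n)) :
    a.mapDomain g = ∑ i ∈ a.support, Finsupp.single (g i) (a i) := by
  unfold Finsupp.mapDomain Finsupp.sum
  rfl

lemma qp_prod (a : Fin n →₀ ℕ) :
    (∏ i ∈ a.support, (QP n i) ^ (a i)) = monomial (emb a) 1 := by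
  have h1 : ∀ i : Fin n, QP n i =
      monomial (Finsupp.single (Sum.inl i) 1 + Finsupp.single (Sum.inr i) 1) 1 := by
    intro i
    rw [QP, X, X, monomial_mul_monomial, mul_one]
  calc (∏ i ∈ a.support, (QP n i) ^ (a i))
      = ∏ i ∈ a.support, monomial
          (a i • (Finsupp.single (Sum.inl i) 1 + Finsupp.single (Sum.inr i) 1)) 1 := by
        refine Finset.prod_congr rfl fun i _ => ?_
        rw [h1 i, monomial_one_pow]
    _ = monomial (∑ i ∈ a.support,
          a i • (Finsupp.single (Sum.inl i) 1 + Finsupp.single (Sum.inr i) 1)) 1 :=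
        prod_monomial _ _
    _ = monomial (emb a) 1 := by
        have hkey : (∑ i ∈ a.support,
            a i • (Finsupp.single (Sum.inl i) (1 : ℕ) + Finsupp.single (Sum.inr i) 1))
              = emb a := by
          unfold emb
          rw [mapDomain_eq_sum a Sum.inl, mapDomain_eq_sum a Sum.inr,
            ← Finset.sum_add_distrib]
          refine Finset.sum_congr rfl fun i _ => ?_
          rw [smul_add, Finsupp.smul_single, Finsupp.smul_single, smul_eq_mul, mul_one]
        rw [hkey]

lemma aeval_qp (Q : MvPolynomial (Fin n) ℂ) :
    (MvPolynomial.aeval (QP n) Q : MvPowerSeries (Fin n ⊕ Fin n) ℂ)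
      = ∑ a ∈ Q.support, monomial (emb a) (Q.coeff a) := by
  rw [MvPolynomial.aeval_def, MvPolynomial.eval₂_eq]
  refine Finset.sum_congr rfl fun a _ => ?_
  rw [qp_prod a, MvPowerSeries.algebraMap_apply]
  simp only [Algebra.algebraMap_self_apply]
  rw [← monomial_zero_eq_C_apply, monomial_mul_monomial, zero_add, mul_one]

lemma coeff_aeval_emb (Q : MvPolynomial (Fin n) ℂ) (a : Fin n →₀ ℕ) :
    coeff (emb a) (MvPolynomial.aeval (QP n) Q : MvPowerSeries (Fin n ⊕ Fin n) ℂ)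
      = Q.coeff a := by
  classical
  rw [aeval_qp, map_sum]
  simp_rw [coeff_monomial]
  by_cases ha : a ∈ Q.support
  · rw [Finset.sum_eq_single a]
    · rw [if_pos rfl]
    · intro b _ hb
      rw [if_neg (fun h => hb (emb_inj h).symm)]
    · intro h; exact absurd ha h
  · rw [Finset.sum_eq_zero, eq_comm]
    · exact MvPolynomial.notMem_support_iff.mp ha
    · intro b hb
      rw [if_neg]
      intro h
      have hab := emb_inj h
      subst hab
      exact ha hb

lemma coeff_aeval_ne (Q : MvPolynomial (Fin n) ℂ) (m : (Fin n ⊕ Fin n) →₀ ℕ)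
    (h : ∀ a : Fin n →₀ ℕ, m ≠ emb a) :
    coeff m (MvPolynomial.aeval (QP n) Q : MvPowerSeries (Fin n ⊕ Fin n) ℂ) = 0 := by
  rw [aeval_qp, map_sum]
  refine Finset.sum_eq_zero fun a _ => ?_
  rw [coeff_monomial, if_neg (h a)]

end Aeval

section NTwo
variable {n : ℕ} (α : Fin n → ℂ)

/-- The quadratic part `Σᵢ αᵢ qᵢ pᵢ`. -/
noncomputable def N2 : MvPowerSeries (Fin n ⊕ Fin n) ℂ :=
  ∑ i : Fin n, monomial (emb (Finsupp.single i 1)) (α i)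

/-- The eigenvalue of the monomial `m` under `F ↦ {N₂, F}`. -/
noncomputable def lam (m : (Fin n ⊕ Fin n) →₀ ℕ) : ℂ :=
  ∑ i : Fin n, α i * ((m (Sum.inr i) : ℂ) - (m (Sum.inl i) : ℂ))

lemma coeff_N2 (m : (Fin n ⊕ Fin n) →₀ ℕ) :
    coeff m (N2 α) = ∑ i : Fin n, if m = emb (Finsupp.single i 1) then α i else 0 := by
  rw [N2, map_sum]
  simp_rw [coeff_monomial]

lemma pd_N2_inl (i : Fin n) :
    pd (Sum.inl i) (N2 α) = monomial (Finsupp.single (Sum.inr i) 1) (α i) := by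
  ext m
  rw [coeff_pd, coeff_N2, coeff_monomial]
  simp_rw [emb_single]
  by_cases hm : m = Finsupp.single (Sum.inr i) 1
  · subst hm
    rw [if_pos rfl, Finset.sum_eq_single i]
    · rw [if_pos (add_comm _ _)]
      simp
    · intro j _ hj
      rw [if_neg]
      intro hEq
      have h2 := congrArg (fun g : (Fin n ⊕ Fin n) →₀ ℕ => g (Sum.inl i)) hEq
      simp only [Finsupp.add_apply, Finsupp.single_apply] at h2
      simp [hj] at h2
    · intro h; exact absurd (Finset.mem_univ i) h
  · rw [if_neg hm, Finset.sum_eq_zero, mul_zero]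
    intro j _
    rw [if_neg]
    intro hEq
    have hji : j = i := by
      by_contra hji
      have h2 := congrArg (fun g : (Fin n ⊕ Fin n) →₀ ℕ => g (Sum.inl i)) hEq
      simp only [Finsupp.add_apply, Finsupp.single_apply] at h2
      simp [hji] at h2
    subst hji
    apply hm
    have : m + Finsupp.single (Sum.inl j) 1
        = Finsupp.single (Sum.inr j) 1 + Finsupp.single (Sum.inl j) 1 := by
      rw [hEq, add_comm]
    exact add_right_cancel this

lemma pd_N2_inr (i : Fin n) :
    pd (Sum.inr i) (N2 α) = monomial (Finsupp.single (Sum.inl i) 1) (α i) := by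
  ext m
  rw [coeff_pd, coeff_N2, coeff_monomial]
  simp_rw [emb_single]
  by_cases hm : m = Finsupp.single (Sum.inl i) 1
  · subst hm
    rw [if_pos rfl, Finset.sum_eq_single i]
    · rw [if_pos rfl]
      simp
    · intro j _ hj
      rw [if_neg]
      intro hEq
      have h2 := congrArg (fun g : (Fin n ⊕ Fin n) →₀ ℕ => g (Sum.inr i)) hEq
      simp only [Finsupp.add_apply, Finsupp.single_apply] at h2
      simp [hj] at h2
    · intro h; exact absurd (Finset.mem_univ i) h
  · rw [if_neg hm, Finset.sum_eq_zero, mul_zero]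
    intro j _
    rw [if_neg]
    intro hEq
    have hji : j = i := by
      by_contra hji
      have h2 := congrArg (fun g : (Fin n ⊕ Fin n) →₀ ℕ => g (Sum.inr i)) hEq
      simp only [Finsupp.add_apply, Finsupp.single_apply] at h2
      simp [hji] at h2
    subst hji
    apply hm
    have : m + Finsupp.single (Sum.inr j) 1
        = Finsupp.single (Sum.inl j) 1 + Finsupp.single (Sum.inr j) 1 := by
      rw [hEq]
    exact add_right_cancel this

lemma coeff_pois_N2 (f : MvPowerSeries (Fin n ⊕ Fin n) ℂ) (m : (Fin n ⊕ Fin n) →₀ ℕ) :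
    coeff m (pois (N2 α) f) = lam α m * coeff m f := by
  rw [pois, map_sum, lam, Finset.sum_mul]
  refine Finset.sum_congr rfl fun i _ => ?_
  rw [map_sub, pd_N2_inl, pd_N2_inr, coeff_single_mul_pd, coeff_single_mul_pd]
  ring

lemma lam_emb (a : Fin n →₀ ℕ) : lam α (emb a) = 0 := by
  rw [lam]
  refine Finset.sum_eq_zero fun i _ => ?_
  rw [emb_inl, emb_inr, sub_self, mul_zero]

lemma lam_zero_resonant {α : Fin n → ℂ} (hα : LinearIndependent ℚ α)
    (m : (Fin n ⊕ Fin n) →₀ ℕ) (h : lam α m = 0) :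
    ∀ i, m (Sum.inl i) = m (Sum.inr i) := by
  intro i
  have hg := Fintype.linearIndependent_iff.mp hα
    (fun i => ((m (Sum.inr i) : ℚ) - (m (Sum.inl i) : ℚ))) ?_ i
  · have h2 : (m (Sum.inr i) : ℚ) = (m (Sum.inl i) : ℚ) := by linarith [sub_eq_zero.mp hg]
    exact_mod_cast h2.symm
  · rw [← h, lam]
    refine Finset.sum_congr rfl fun j _ => ?_
    rw [Rat.smul_def]
    push_cast
    ring

end NTwo

section ExpAd
variable {n : ℕ}

lemma coeff_expAd_eq {k : ℕ} (hk : 3 ≤ k) (f H : MvPowerSeries (Fin n ⊕ Fin n) ℂ)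
    (hf : OrdGe f (k + 1)) (h2 : OrdGe (H - C (coeff 0 H)) 2)
    (m : (Fin n ⊕ Fin n) →₀ ℕ) (hm : mdeg m ≤ k + 2) :
    coeff m (expAd f H) = coeff m H + coeff m (pois H f) := by
  have had1 : OrdGe (pois H f) (k + 1) := by
    have hsplit : pois H f
        = pois (C (coeff 0 H)) f
          + pois (H - C (coeff 0 H)) f := by
      rw [← pois_add_left]
      ring_nf
    rw [hsplit, pois_C_left, zero_add]
    exact ordGe_mono (ordGe_pois h2 hf) (by omega)
  have hj : ∀ j, OrdGe (adIter f H (j + 2)) (k + 3) := by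
    intro j
    induction j with
    | zero =>
      have : OrdGe (adIter f H 2) ((k + 1) + (k + 1) - 2) := ordGe_pois had1 hf
      exact ordGe_mono this (by omega)
    | succ j ih =>
      have : OrdGe (adIter f H (j + 3)) ((k + 3) + (k + 1) - 2) := ordGe_pois ih hf
      exact ordGe_mono this (by omega)
  have hsupp : (Function.support fun j : ℕ =>
      ((j.factorial : ℂ))⁻¹ * coeff m (adIter f H j)) ⊆ ↑({0, 1} : Finset ℕ) := by
    intro j hjs
    simp only [Function.mem_support] at hjs
    by_contra hmem
    simp only [Finset.coe_insert, Finset.coe_singleton, Set.mem_insert_iff,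
      Set.mem_singleton_iff] at hmem
    push_neg at hmem
    obtain ⟨j', rfl⟩ : ∃ j', j = j' + 2 := ⟨j - 2, by omega⟩
    exact hjs (by rw [hj j' m (by omega), mul_zero])
  have : coeff m (expAd f H)
      = ∑ᶠ j : ℕ, ((j.factorial : ℂ))⁻¹ * coeff m (adIter f H j) := rfl
  rw [this, finsum_eq_sum_of_support_subset _ hsupp,
    Finset.sum_pair (by norm_num : (0 : ℕ) ≠ 1)]
  simp [adIter, Nat.factorial]

end ExpAd

/-! ### Main theorem -/

/-- **Inductive normalization step.** Let `k ≥ 3` be odd, `P ∈ ℂ[X₁,…,Xₙ]` with linear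
part `Σᵢ αᵢXᵢ` (`α₁,…,αₙ` linearly independent over ℚ) and
`H = P(q₁p₁,…,qₙpₙ) + o(k)`. Then there are `f` of order ≥ `k+1` and a homogeneous
polynomial `B ∈ ℂ[X₁,…,Xₙ]` of degree `(k+1)/2` with
`e^{ad_f}(H) = (P+B)(q₁p₁,…,qₙpₙ) + o(k+2)`. -/
theorem inductive_normalization_step (n : ℕ) (α : Fin n → ℂ)
    (hα : LinearIndependent ℚ α)
    (k : ℕ) (hk : 3 ≤ k) (hodd : Odd k)
    (P : MvPolynomial (Fin n) ℂ)
    (hP : ∀ i : Fin n, P.coeff (Finsupp.single i 1) = α i)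
    (H : MvPowerSeries (Fin n ⊕ Fin n) ℂ)
    (hH : OEq H (MvPolynomial.aeval
      (fun i : Fin n => (X (Sum.inl i) * X (Sum.inr i) : MvPowerSeries (Fin n ⊕ Fin n) ℂ)) P) k) :
    ∃ (f : MvPowerSeries (Fin n ⊕ Fin n) ℂ) (B : MvPolynomial (Fin n) ℂ),
      OrdGe f (k + 1) ∧ B.IsHomogeneous ((k + 1) / 2) ∧
      OEq (expAd f H)
        (MvPolynomial.aeval
          (fun i : Fin n => (X (Sum.inl i) * X (Sum.inr i) : MvPowerSeries (Fin n ⊕ Fin n) ℂ))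
          (P + B)) (k + 2) := by
  classical
  have hQP : (fun i : Fin n => (X (Sum.inl i) * X (Sum.inr i) :
      MvPowerSeries (Fin n ⊕ Fin n) ℂ)) = QP n := rfl
  rw [hQP] at hH ⊢
  set N : MvPowerSeries (Fin n ⊕ Fin n) ℂ := MvPolynomial.aeval (QP n) P with hN
  set R : MvPowerSeries (Fin n ⊕ Fin n) ℂ := H - N with hR
  have hRord : OrdGe R (k + 1) := fun m hm => hH m (by omega)
  set f : MvPowerSeries (Fin n ⊕ Fin n) ℂ := fun m =>
    if (mdeg m = k + 1 ∨ mdeg m = k + 2) ∧ lam α m ≠ 0 then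
      -(coeff m R) / lam α m else 0 with hf
  have hcf : ∀ m, coeff m f
      = if (mdeg m = k + 1 ∨ mdeg m = k + 2) ∧ lam α m ≠ 0 then
        -(coeff m R) / lam α m else 0 := fun m => rfl
  have hford : OrdGe f (k + 1) := by
    intro m hm
    rw [hcf, if_neg]
    rintro ⟨h1 | h1, _⟩ <;> omega
  have hNc : coeff 0 N = P.coeff 0 := by
    have h0 : (0 : (Fin n ⊕ Fin n) →₀ ℕ) = emb 0 := emb_zero.symm
    rw [hN, h0, coeff_aeval_emb]
  have hH0 : coeff 0 H = P.coeff 0 := by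
    have h0 := hH 0 (by simp [mdeg])
    rw [map_sub, sub_eq_zero] at h0
    rw [h0, hNc]
  have hlow : OrdGe (N - C (P.coeff 0) - N2 α) 4 := by
    intro m hm
    rw [map_sub, map_sub]
    by_cases hres : ∃ a : Fin n →₀ ℕ, m = emb a
    · obtain ⟨a, rfl⟩ := hres
      rw [hN, coeff_aeval_emb]
      have h4 : 2 * mdeg a < 4 := by rw [← mdeg_emb]; exact hm
      have h01 : mdeg a = 0 ∨ mdeg a = 1 := by omega
      rcases h01 with h0 | h1
      · have ha0 : a = 0 := mdeg_eq_zero h0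
        subst ha0
        rw [emb_zero, coeff_C, if_pos rfl, coeff_N2,
          Finset.sum_eq_zero (fun i _ => if_neg (fun h => emb_single_ne_zero i h.symm))]
        ring
      · obtain ⟨i, rfl⟩ := mdeg_eq_one h1
        rw [hP i, coeff_C, if_neg (emb_single_ne_zero i), coeff_N2,
          Finset.sum_eq_single i]
        · rw [if_pos rfl]; ring
        · intro j _ hji
          rw [if_neg]
          intro h
          exact hji ((Finsupp.single_left_inj one_ne_zero).mp (emb_inj h)).symm
        · intro h; exact absurd (Finset.mem_univ i) h
    · push_neg at hres
      rw [hN, coeff_aeval_ne _ _ hres, coeff_C,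
        if_neg (fun h => hres 0 (by rw [h, emb_zero])), coeff_N2,
        Finset.sum_eq_zero (fun i _ => if_neg (hres _))]
      ring
  have h2 : OrdGe (H - C (coeff 0 H)) 2 := by
    intro m hm
    have hHN := hH m (by omega)
    rw [map_sub] at hHN ⊢
    rw [sub_eq_zero] at hHN
    rw [hHN, hH0]
    rcases eq_or_ne m 0 with rfl | hm0
    · rw [coeff_C, if_pos rfl, hNc, sub_self]
    · rw [coeff_C, if_neg hm0, sub_zero, hN]
      apply coeff_aeval_ne
      intro a hma
      have hme := mdeg_emb a
      rw [← hma] at hme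
      have : mdeg m = 0 := by omega
      exact hm0 (mdeg_eq_zero this)
  have hrest : OrdGe (H - C (P.coeff 0) - N2 α) 4 := by
    have hdec : H - C (P.coeff 0) - N2 α
        = R + (N - C (P.coeff 0) - N2 α) := by
      rw [hR]; ring
    rw [hdec]
    exact ordGe_add (ordGe_mono hRord (by omega)) hlow
  have hpois : ∀ m, mdeg m ≤ k + 2 →
      coeff m (pois H f) = lam α m * coeff m f := by
    intro m hm
    have hdec : pois H f = pois (C (P.coeff 0)) f + pois (N2 α) f
        + pois (H - C (P.coeff 0) - N2 α) f := by
      rw [← pois_add_left, ← pois_add_left]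
      ring_nf
    rw [hdec, map_add, map_add, pois_C_left, map_zero, zero_add, coeff_pois_N2]
    have hz : coeff m (pois (H - C (P.coeff 0) - N2 α) f) = 0 :=
      ordGe_pois hrest hford m (by omega)
    rw [hz, add_zero]
  set A : Finset (Fin n →₀ ℕ) := Finset.finsuppAntidiag Finset.univ ((k + 1) / 2) with hA
  have hmemA : ∀ a : Fin n →₀ ℕ, a ∈ A ↔ mdeg a = (k + 1) / 2 := by
    intro a
    rw [hA, Finset.mem_finsuppAntidiag]
    constructor
    · rintro ⟨h1, _⟩; rw [mdeg_eq_univ_sum]; exact h1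
    · intro h1; exact ⟨by rw [← mdeg_eq_univ_sum]; exact h1, Finset.subset_univ _⟩
  set B : MvPolynomial (Fin n) ℂ :=
    ∑ a ∈ A, MvPolynomial.monomial a (coeff (emb a) R) with hB
  have hBhom : B.IsHomogeneous ((k + 1) / 2) := by
    apply MvPolynomial.IsHomogeneous.sum
    intro a ha
    refine MvPolynomial.isHomogeneous_monomial _ ?_
    show a.degree = (k + 1) / 2
    rw [show a.degree = mdeg a from rfl]
    exact (hmemA a).mp ha
  have haevalB : (MvPolynomial.aeval (QP n) B : MvPowerSeries (Fin n ⊕ Fin n) ℂ)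
      = ∑ a ∈ A, monomial (emb a) (coeff (emb a) R) := by
    rw [hB, map_sum]
    refine Finset.sum_congr rfl fun a _ => ?_
    rw [MvPolynomial.aeval_monomial]
    have hprod : (a.prod fun i e => QP n i ^ e) = monomial (emb a) 1 := qp_prod a
    rw [hprod, MvPowerSeries.algebraMap_apply]
    simp only [Algebra.algebraMap_self_apply]
    rw [← monomial_zero_eq_C_apply, monomial_mul_monomial, zero_add, mul_one]
  have hcB : ∀ m, coeff m (MvPolynomial.aeval (QP n) B : MvPowerSeries (Fin n ⊕ Fin n) ℂ)
      = ∑ a ∈ A, (if m = emb a then coeff (emb a) R else 0) := by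
    intro m
    rw [haevalB, map_sum]
    simp_rw [coeff_monomial]
  refine ⟨f, B, hford, hBhom, ?_⟩
  intro m hm
  have hexp := coeff_expAd_eq hk f H hford h2 m hm
  have hsplit : coeff m (expAd f H - MvPolynomial.aeval (QP n) (P + B))
      = (coeff m R + lam α m * coeff m f)
        - coeff m (MvPolynomial.aeval (QP n) B) := by
    rw [map_sub, hexp, hpois m hm, map_add (MvPolynomial.aeval (QP n)) P B, map_add, ← hN]
    have hcoefR : coeff m R = coeff m H - coeff m N := by rw [hR, map_sub]
    rw [hcoefR]
    ring
  rw [hsplit, hcB m]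
  by_cases hdeg : mdeg m ≤ k
  · have hR0 : coeff m R = 0 := hRord m (by omega)
    have hf0 : coeff m f = 0 := by
      rw [hcf, if_neg]
      rintro ⟨h1 | h1, _⟩ <;> omega
    rw [hR0, hf0, Finset.sum_eq_zero, mul_zero]
    · ring
    · intro a ha
      rw [if_neg]
      intro hme
      have h1 : mdeg (emb a) = 2 * ((k + 1) / 2) := by rw [mdeg_emb, (hmemA a).mp ha]
      obtain ⟨t, ht⟩ := hodd
      rw [← hme] at h1
      omega
  · have hdeg2 : mdeg m = k + 1 ∨ mdeg m = k + 2 := by omega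
    by_cases hlam : lam α m = 0
    · have hf0 : coeff m f = 0 := by
        rw [hcf, if_neg]
        rintro ⟨_, hne⟩
        exact hne hlam
      obtain ⟨a, rfl⟩ := resonant_eq_emb m (lam_zero_resonant hα m hlam)
      have heven : mdeg (emb a) = 2 * mdeg a := mdeg_emb a
      obtain ⟨t, ht⟩ := hodd
      have hak : mdeg a = (k + 1) / 2 := by omega
      rw [hf0, mul_zero, add_zero, Finset.sum_eq_single a]
      · rw [if_pos rfl]; ring
      · intro b _ hba
        rw [if_neg (fun h => hba (emb_inj h).symm)]
      · intro ha
        exact absurd ((hmemA a).mpr hak) ha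
    · have hfm : coeff m f = -(coeff m R) / lam α m := by
        rw [hcf, if_pos ⟨hdeg2, hlam⟩]
      rw [hfm, Finset.sum_eq_zero]
      · field_simp
        ring
      · intro a ha
        rw [if_neg]
        intro hme
        exact hlam (by rw [hme, lam_emb])
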